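/- Let a, z₁, z₂, x₁, x₂ ∈ ℂ and set b := −a·(z₁+z₂) and c := a·z₁·z₂. Then (|a|²−|c|²)·|x₂|² + 2·Re( conj(a·x₂)·b·x₁ ) − 2·Re( conj(b·x₂)·c·x₁ ) + (|a|²−|c|²)·|x₁|² = |a|²·(1−|z₁|²)·|x₂ − z₂·x₁|² + |a|²·(1−|z₂|²)·|x₂ − z₁·x₁|² + |a|²·(1−|z₁|²)·(1−|z₂|²)·( |x₁|² − |x₂|² ). -/

import Mathlib

/-- identity expressing the dissipation form `q_d` in terms of the roots. -/
theorem stmt_12 (a z₁ z₂ x₁ x₂ : ℂ) (b c : ℂ)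
    (hb : b = -a * (z₁ + z₂)) (hc : c = a * z₁ * z₂) :
    (‖a‖ ^ 2 - ‖c‖ ^ 2) * ‖x₂‖ ^ 2
      + 2 * ((starRingEnd ℂ) (a * x₂) * (b * x₁)).re
      - 2 * ((starRingEnd ℂ) (b * x₂) * (c * x₁)).re
      + (‖a‖ ^ 2 - ‖c‖ ^ 2) * ‖x₁‖ ^ 2
    = ‖a‖ ^ 2 * (1 - ‖z₁‖ ^ 2) * ‖x₂ - z₂ * x₁‖ ^ 2
      + ‖a‖ ^ 2 * (1 - ‖z₂‖ ^ 2) * ‖x₂ - z₁ * x₁‖ ^ 2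
      + ‖a‖ ^ 2 * (1 - ‖z₁‖ ^ 2) * (1 - ‖z₂‖ ^ 2)
          * (‖x₁‖ ^ 2 - ‖x₂‖ ^ 2) := by
  subst hb hc
  simp only [Complex.sq_norm, Complex.normSq_apply, Complex.mul_re, Complex.mul_im,
    Complex.sub_re, Complex.sub_im, Complex.neg_re, Complex.neg_im, Complex.add_re,
    Complex.add_im, Complex.conj_re, Complex.conj_im, Complex.one_re, Complex.one_im]
  ring
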